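/- Under the conditions of Lemma 1, the sequence d_n satisfies d_{n-1} < (k_{n+1} + 1) d_n for all n ≥ 0. -/

import Mathlib

theorem stmt6
    (a : ℝ) (ha : 1 < a)
    (k : ℤ → ℕ) (hkpos : ∀ n : ℤ, 1 ≤ n → 1 ≤ k n)
    (hkmono : ∀ n : ℤ, 1 ≤ n → k n < k (n + 1))
    (hk2a : 2 * a ≤ (k 1 : ℝ)) (hk5 : 5 ≤ k 1)
    (d : ℤ → ℝ) (hdm : d (-1) = 1) (hdpos : ∀ n : ℤ, -1 ≤ n → 0 < d n)
    (hsum : ∀ n : ℤ, 0 ≤ n → Even n →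
      Summable (fun s : ℕ => a ^ s * d (n + 4 * s + 2)))
    (hrecE : ∀ n : ℤ, 0 ≤ n → Even n →
      d n = (k (n + 2) : ℝ) * d (n + 1) + d (n + 2))
    (hrecO : ∀ n : ℤ, -1 ≤ n → Odd n →
      d n = (k (n + 2) : ℝ) * d (n + 1) + d (n + 2) +
        (a - 1) * ∑' s : ℕ, a ^ s * d ((n + 1) + 4 * s + 2)) :
    ∀ n : ℤ, 0 ≤ n → d (n - 1) < ((k (n + 1) : ℝ) + 1) * d n := by
  -- k is ≥ k 1 for all indices ≥ 1
  have hkge : ∀ m : ℤ, 1 ≤ m → k 1 ≤ k m := by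
    intro m hm
    refine Int.le_induction (motive := fun m _ => k 1 ≤ k m) (le_refl _) (fun p hp ih => ?_) m hm
    exact le_trans ih (le_of_lt (hkmono p hp))
  have hkge' : ∀ m : ℤ, 1 ≤ m → 2 * a ≤ (k m : ℝ) := by
    intro m hm
    exact le_trans hk2a (by exact_mod_cast hkge m hm)
  -- one-step decay
  have hstep : ∀ m : ℤ, -1 ≤ m → 2 * a * d (m + 1) ≤ d m := by
    intro m hm
    rcases Int.even_or_odd m with he | ho
    · have h0 : 0 ≤ m := by
        obtain ⟨c, hc⟩ := he; omega
      rw [hrecE m h0 he]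
      have hk := hkge' (m + 2) (by omega)
      nlinarith [hdpos (m + 1) (by omega), hdpos (m + 2) (by omega)]
    · rw [hrecO m hm ho]
      have hk := hkge' (m + 2) (by omega)
      have hT : 0 ≤ ∑' s : ℕ, a ^ s * d ((m + 1) + 4 * s + 2) := by
        apply tsum_nonneg
        intro s
        have hs : (0 : ℤ) ≤ (s : ℤ) := Int.natCast_nonneg s
        exact mul_nonneg (by positivity) (hdpos _ (by omega)).le
      nlinarith [hdpos (m + 1) (by omega), hdpos (m + 2) (by omega),
        mul_nonneg (by linarith : (0:ℝ) ≤ a - 1) hT]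
  have hmono : ∀ m : ℤ, -1 ≤ m → d (m + 1) < d m := by
    intro m hm
    have := hstep m hm
    nlinarith [hdpos (m + 1) (by omega)]
  -- iterated decay
  have hpow : ∀ (j : ℕ) (m : ℤ), -1 ≤ m → (2 * a) ^ j * d (m + j) ≤ d m := by
    intro j
    induction j with
    | zero => intro m hm; simp
    | succ j ih =>
      intro m hm
      have h1 := hstep (m + j) (by omega)
      have h2 := ih m hm
      have hpos : (0:ℝ) < (2 * a) ^ j := by positivity
      have : (m : ℤ) + (j + 1 : ℕ) = (m + j) + 1 := by push_cast; ring
      rw [this]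
      calc (2 * a) ^ (j + 1) * d ((m + j) + 1)
          = (2 * a) ^ j * (2 * a * d ((m + j) + 1)) := by ring
        _ ≤ (2 * a) ^ j * d (m + j) := by
            exact mul_le_mul_of_nonneg_left h1 hpos.le
        _ ≤ d m := h2
  intro n hn
  rcases Int.even_or_odd n with he | ho
  · -- n even: use odd recurrence at n - 1
    have hoe : Odd (n - 1) := by
      obtain ⟨c, hc⟩ := he; exact ⟨c - 1, by omega⟩
    have hrec := hrecO (n - 1) (by omega) hoe
    have hrw : n - 1 + 2 = n + 1 := by ring
    have hrw2 : n - 1 + 1 = n := by ring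
    rw [hrw, hrw2] at hrec
    set T := ∑' s : ℕ, a ^ s * d (n + 4 * s + 2) with hTdef
    have hT0 : 0 ≤ T := by
      apply tsum_nonneg
      intro s
      have hs : (0 : ℤ) ≤ (s : ℤ) := Int.natCast_nonneg s
      exact mul_nonneg (by positivity) (hdpos _ (by omega)).le
    have hd2 : 0 < d (n + 2) := hdpos (n + 2) (by omega)
    -- termwise bound
    have hterm : ∀ s : ℕ, a ^ s * d (n + 4 * s + 2) ≤ d (n + 2) * (1/16) ^ s := by
      intro s
      have hp := hpow (4 * s) (n + 2) (by omega)
      have hcast : (n + 2) + ((4 * s : ℕ) : ℤ) = n + 4 * s + 2 := by push_cast; ring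
      rw [hcast] at hp
      have hdX : 0 < d (n + 4 * s + 2) := by
        have hs : (0 : ℤ) ≤ (s : ℤ) := Int.natCast_nonneg s
        exact hdpos _ (by omega)
      have hge : (16 * a) ^ s ≤ (2 * a) ^ (4 * s) := by
        have : (2 * a) ^ (4 * s) = (16 * a ^ 4) ^ s := by
          rw [pow_mul, show (2 * a) ^ 4 = 16 * a ^ 4 by ring]
        rw [this]
        apply pow_le_pow_left₀ (by positivity)
        nlinarith [sq_nonneg a, sq_nonneg (a - 1), sq_nonneg (a ^ 2 - 1)]
      have h16 : (16 : ℝ) ^ s * (a ^ s * d (n + 4 * s + 2)) ≤ d (n + 2) := by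
        calc (16 : ℝ) ^ s * (a ^ s * d (n + 4 * s + 2))
            = (16 * a) ^ s * d (n + 4 * s + 2) := by rw [mul_pow]; ring
          _ ≤ (2 * a) ^ (4 * s) * d (n + 4 * s + 2) :=
              mul_le_mul_of_nonneg_right hge hdX.le
          _ ≤ d (n + 2) := hp
      have h16pos : (0:ℝ) < (16:ℝ) ^ s := by positivity
      rw [show d (n + 2) * ((1:ℝ)/16) ^ s = d (n + 2) / 16 ^ s by
            rw [div_pow]; ring, le_div_iff₀ h16pos]
      nlinarith [h16]
    have hgeo : Summable (fun s : ℕ => d (n + 2) * (1/16) ^ s) := by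
      apply Summable.mul_left
      exact summable_geometric_of_lt_one (by norm_num) (by norm_num)
    have hTle : T ≤ d (n + 2) * (16 / 15) := by
      have := Summable.tsum_le_tsum hterm (hsum n hn he) hgeo
      rw [tsum_mul_left, tsum_geometric_of_lt_one (by norm_num) (by norm_num)] at this
      calc T ≤ d (n + 2) * (1 - 1/16)⁻¹ := this
        _ = d (n + 2) * (16 / 15) := by norm_num
    have h1 := hstep (n + 1) (by omega)
    have h2 := hstep n (by omega)
    have hrw3 : n + 1 + 1 = n + 2 := by ring
    rw [hrw3] at h1
    have hd1 : 0 < d (n + 1) := hdpos (n + 1) (by omega)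
    have hdn : 0 < d n := hdpos n (by omega)
    rw [hrec]
    have key : d (n + 1) + (a - 1) * T < d n := by
      nlinarith [mul_le_mul_of_nonneg_left hTle (by linarith : (0:ℝ) ≤ a - 1)]
    nlinarith [key]
  · -- n odd: n ≥ 1, use even recurrence at n - 1
    have h1 : 1 ≤ n := by
      obtain ⟨c, hc⟩ := ho; omega
    have hee : Even (n - 1) := by
      obtain ⟨c, hc⟩ := ho; exact ⟨c, by omega⟩
    have hrec := hrecE (n - 1) (by omega) hee
    have hrw : n - 1 + 2 = n + 1 := by ring
    have hrw2 : n - 1 + 1 = n := by ring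
    rw [hrw, hrw2] at hrec
    have := hmono n (by omega)
    rw [hrec]
    linarith
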